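/- arXiv:2011.08938 — 2 statements merged into one kernel-verified Lean document; each statement's English description precedes it below -/
import Mathlib

section
/- Let Γ be a reseminant graph. Then Γ is isomorphic to R̃_k for some integer k ≥ 0 if and only if Γ has two adjacent vertices each of degree 2. -/
/-- The 5-cycle `C₅` on `Fin 5`. -/
def cycle5 : SimpleGraph (Fin 5) :=
  SimpleGraph.fromRel (fun i j => j = i + 1)

instance : DecidableRel cycle5.Adj := fun i j =>
  decidable_of_iff (i ≠ j ∧ (j = i + 1 ∨ i = j + 1)) Iff.rfl

/-- Duplicating the vertex `v'` of a simple graph `G`: a new vertex (the `Sum.inr` vertex) is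
added, adjacent to `v'` and to every neighbor of `v'` in `G`. -/
def dupGraph {V : Type*} (G : SimpleGraph V) (v' : V) : SimpleGraph (V ⊕ Unit) where
  Adj x y :=
    match x, y with
    | Sum.inl a, Sum.inl b => G.Adj a b
    | Sum.inl a, Sum.inr _ => a = v' ∨ G.Adj a v'
    | Sum.inr _, Sum.inl b => b = v' ∨ G.Adj b v'
    | Sum.inr _, Sum.inr _ => False
  symm := by
    constructor
    rintro (a | a) (b | b) h
    · exact G.adj_symm h
    · exact h
    · exact h
    · exact h.elim
  loopless := by
    constructor
    rintro (a | a) h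
    · exact G.irrefl h
    · exact h.elim

instance dupGraphAdjDecidable {V : Type*} [DecidableEq V] (G : SimpleGraph V)
    [DecidableRel G.Adj] (v' : V) : DecidableRel (dupGraph G v').Adj := fun x y =>
  match x, y with
  | Sum.inl a, Sum.inl b => inferInstanceAs (Decidable (G.Adj a b))
  | Sum.inl a, Sum.inr _ => inferInstanceAs (Decidable (a = v' ∨ G.Adj a v'))
  | Sum.inr _, Sum.inl b => inferInstanceAs (Decidable (b = v' ∨ G.Adj b v'))
  | Sum.inr _, Sum.inr _ => inferInstanceAs (Decidable False)

/-- The vertex type of the reseminant graph built from `C₅` by the duplications recorded in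
the list `l` (each entry records which of the five original cycle vertices is duplicated). -/
def resemType : List (Fin 5) → Type
  | [] => Fin 5
  | _ :: l => resemType l ⊕ Unit

instance resemTypeFintype : ∀ l : List (Fin 5), Fintype (resemType l)
  | [] => inferInstanceAs (Fintype (Fin 5))
  | _ :: l => letI := resemTypeFintype l; inferInstanceAs (Fintype (resemType l ⊕ Unit))

instance resemTypeDecEq : ∀ l : List (Fin 5), DecidableEq (resemType l)
  | [] => inferInstanceAs (DecidableEq (Fin 5))
  | _ :: l => letI := resemTypeDecEq l; inferInstanceAs (DecidableEq (resemType l ⊕ Unit))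

/-- The copy, inside `resemType l`, of an original vertex of the 5-cycle. -/
def origVert : (l : List (Fin 5)) → Fin 5 → resemType l
  | [], i => i
  | _ :: l, i => Sum.inl (origVert l i)

/-- The reseminant graph obtained from the 5-cycle `C₅` by the finite sequence of vertex
duplications recorded in `l`: for `l = v :: l'`, the vertex (the copy of the original cycle
vertex) `v` is duplicated in the graph built from `l'`. -/
def resemGraph : (l : List (Fin 5)) → SimpleGraph (resemType l)
  | [] => cycle5
  | v :: l => dupGraph (resemGraph l) (origVert l v)

instance resemGraphAdjDecidable : ∀ l : List (Fin 5), DecidableRel (resemGraph l).Adj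
  | [] => inferInstanceAs (DecidableRel cycle5.Adj)
  | v :: l =>
    letI := resemGraphAdjDecidable l
    inferInstanceAs (DecidableRel (dupGraph (resemGraph l) (origVert l v)).Adj)

/-- A simple graph is *reseminant* if it is (isomorphic to) a graph obtained from the 5-cycle
`C₅` by a finite sequence of vertex duplications, each duplicating one of the five original
cycle vertices. -/
def IsReseminant {V : Type*} (Γ : SimpleGraph V) : Prop :=
  ∃ l : List (Fin 5), Nonempty (Γ ≃g resemGraph l)

/-- `R̃_n`: the reseminant graph on `n + 5` vertices obtained from `C₅` by `n` successive
duplications, all duplicating the same fixed vertex `0` of the original 5-cycle. -/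
def tildeR (n : ℕ) : SimpleGraph (resemType (List.replicate n 0)) :=
  resemGraph (List.replicate n 0)

def blow (m : Fin 5 → ℕ) : SimpleGraph (Σ i : Fin 5, Fin (m i)) where
  Adj x y := x ≠ y ∧ (x.1 = y.1 ∨ cycle5.Adj x.1 y.1)
  symm := by
    constructor
    rintro x y ⟨h1, h2⟩
    refine ⟨h1.symm, ?_⟩
    rcases h2 with h | h
    · exact Or.inl h.symm
    · exact Or.inr h.symm
  loopless := ⟨fun x h => h.1 rfl⟩

lemma sigma_fin_ext {m : Fin 5 → ℕ} (x y : Σ i, Fin (m i)) :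
    x = y ↔ x.1 = y.1 ∧ (x.2 : ℕ) = (y.2 : ℕ) := by
  constructor
  · rintro rfl; exact ⟨rfl, rfl⟩
  · obtain ⟨i, b⟩ := x
    obtain ⟨j, c⟩ := y
    rintro ⟨h1, h2⟩
    dsimp at h1 h2
    subst h1
    exact congrArg _ (Fin.ext h2)

/-- isomorphic graphs have isomorphic duplications -/
def dupCongr {V W : Type*} {G : SimpleGraph V} {H : SimpleGraph W} (e : G ≃g H) (v : V) :
    dupGraph G v ≃g dupGraph H (e v) where
  toEquiv := Equiv.sumCongr e.toEquiv (Equiv.refl Unit)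
  map_rel_iff' := by
    rintro (a | a) (b | b)
    · exact e.map_rel_iff
    · show (e a = e v ∨ H.Adj (e a) (e v)) ↔ (a = v ∨ G.Adj a v)
      rw [e.map_adj_iff, EmbeddingLike.apply_eq_iff_eq]
    · show (e b = e v ∨ H.Adj (e b) (e v)) ↔ (b = v ∨ G.Adj b v)
      rw [e.map_adj_iff, EmbeddingLike.apply_eq_iff_eq]
    · exact Iff.rfl

def dupBlowEquiv (m : Fin 5 → ℕ) (v : Fin 5) :
    ((Σ i, Fin (m i)) ⊕ Unit) ≃ (Σ i : Fin 5, Fin (m i + if i = v then 1 else 0)) where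
  toFun x :=
    match x with
    | Sum.inl ⟨i, b⟩ => ⟨i, ⟨b.1, by omega⟩⟩
    | Sum.inr _ => ⟨v, ⟨m v, by simp⟩⟩
  invFun y := if h : (y.2 : ℕ) < m y.1 then Sum.inl ⟨y.1, ⟨y.2, h⟩⟩ else Sum.inr ()
  left_inv x := by
    match x with
    | Sum.inl ⟨i, b⟩ => simp [b.2]
    | Sum.inr ⟨⟩ => simp
  right_inv := by
    rintro ⟨i, c⟩
    by_cases h : (c : ℕ) < m i
    · simp [h]
    · have hc := c.2
      have hiv : i = v := by
        by_contra hne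
        have h0 : (if i = v then 1 else 0) = 0 := if_neg hne
        omega
      subst hiv
      have h1 : (if i = i then 1 else 0) = 1 := if_pos rfl
      have : (c : ℕ) = m i := by omega
      simp only [dif_neg h]
      exact (sigma_fin_ext _ _).2 ⟨rfl, this.symm⟩

lemma blow_adj' {m : Fin 5 → ℕ} (x y : Σ i, Fin (m i)) :
    (blow m).Adj x y ↔ (x.1 = y.1 ∧ (x.2 : ℕ) ≠ (y.2 : ℕ)) ∨ cycle5.Adj x.1 y.1 := by
  show (x ≠ y ∧ (x.1 = y.1 ∨ cycle5.Adj x.1 y.1)) ↔ _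
  rw [Ne, sigma_fin_ext, not_and]
  constructor
  · rintro ⟨h1, h2 | h2⟩
    · exact Or.inl ⟨h2, h1 h2⟩
    · exact Or.inr h2
  · rintro (⟨h1, h2⟩ | h)
    · exact ⟨fun _ => h2, Or.inl h1⟩
    · exact ⟨fun hf => absurd (hf ▸ h) cycle5.irrefl, Or.inr h⟩

def dupBlowIso (m : Fin 5 → ℕ) (v : Fin 5) (a : Fin (m v)) :
    dupGraph (blow m) ⟨v, a⟩ ≃g blow (fun i => m i + if i = v then 1 else 0) where
  toEquiv := dupBlowEquiv m v
  map_rel_iff' := by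
    rintro (⟨i, b⟩ | ⟨⟩) (⟨j, c⟩ | ⟨⟩)
    · show (blow _).Adj ⟨i, ⟨(b : ℕ), _⟩⟩ ⟨j, ⟨(c : ℕ), _⟩⟩ ↔ (blow m).Adj ⟨i, b⟩ ⟨j, c⟩
      rw [blow_adj', blow_adj']
    · show (blow _).Adj ⟨i, ⟨(b : ℕ), _⟩⟩ ⟨v, ⟨m v, _⟩⟩ ↔
        ((⟨i, b⟩ : Σ t, Fin (m t)) = ⟨v, a⟩ ∨ (blow m).Adj ⟨i, b⟩ ⟨v, a⟩)
      rw [blow_adj', blow_adj', sigma_fin_ext]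
      dsimp only
      have hb := b.2
      constructor
      · rintro (⟨h1, -⟩ | h)
        · subst h1
          by_cases hba : (b : ℕ) = (a : ℕ)
          · exact Or.inl ⟨rfl, hba⟩
          · exact Or.inr (Or.inl ⟨rfl, hba⟩)
        · exact Or.inr (Or.inr h)
      · rintro (⟨h1, -⟩ | ⟨h1, -⟩ | h)
        · subst h1; exact Or.inl ⟨rfl, by omega⟩
        · subst h1; exact Or.inl ⟨rfl, by omega⟩
        · exact Or.inr h
    · show (blow _).Adj ⟨v, ⟨m v, _⟩⟩ ⟨j, ⟨(c : ℕ), _⟩⟩ ↔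
        ((⟨j, c⟩ : Σ t, Fin (m t)) = ⟨v, a⟩ ∨ (blow m).Adj ⟨j, c⟩ ⟨v, a⟩)
      rw [blow_adj', blow_adj', sigma_fin_ext]
      dsimp only
      have hc := c.2
      constructor
      · rintro (⟨h1, -⟩ | h)
        · subst h1
          by_cases hca : (c : ℕ) = (a : ℕ)
          · exact Or.inl ⟨rfl, hca⟩
          · exact Or.inr (Or.inl ⟨rfl, hca⟩)
        · exact Or.inr (Or.inr (cycle5.adj_symm h))
      · rintro (⟨h1, -⟩ | ⟨h1, -⟩ | h)
        · exact Or.inl ⟨h1.symm, by subst h1; omega⟩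
        · exact Or.inl ⟨h1.symm, by subst h1; omega⟩
        · exact Or.inr (cycle5.adj_symm h)
    · show (blow _).Adj ⟨v, ⟨m v, _⟩⟩ ⟨v, ⟨m v, _⟩⟩ ↔ False
      simp only [iff_false]
      exact (blow _).irrefl

lemma dupBlowEquiv_inl_fst (m : Fin 5 → ℕ) (v : Fin 5) (x : Σ i, Fin (m i)) :
    ((dupBlowEquiv m v) (Sum.inl x)).1 = x.1 := by
  obtain ⟨i, b⟩ := x; rfl

def cycleBlowIso : cycle5 ≃g blow (fun _ => 1) where
  toEquiv :=
    { toFun := fun i => ⟨i, 0⟩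
      invFun := fun x => x.1
      left_inv := fun i => rfl
      right_inv := fun x => by
        obtain ⟨i, b⟩ := x
        exact congrArg _ (Subsingleton.elim _ _) }
  map_rel_iff' := by
    intro i j
    show (blow _).Adj ⟨i, 0⟩ ⟨j, 0⟩ ↔ cycle5.Adj i j
    rw [blow_adj']
    dsimp only
    constructor
    · rintro (⟨-, h⟩ | h)
      · exact absurd rfl h
      · exact h
    · exact fun h => Or.inr h

def blowCongr {m m' : Fin 5 → ℕ} (h : ∀ i, m i = m' i) : blow m ≃g blow m' where
  toEquiv :=
    { toFun := fun x => ⟨x.1, Fin.cast (h x.1) x.2⟩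
      invFun := fun x => ⟨x.1, Fin.cast (h x.1).symm x.2⟩
      left_inv := fun x => by obtain ⟨i, b⟩ := x; rfl
      right_inv := fun x => by obtain ⟨i, b⟩ := x; rfl }
  map_rel_iff' := by
    rintro ⟨i, b⟩ ⟨j, c⟩
    simp only [Equiv.coe_fn_mk, blow_adj']
    simp [Fin.coe_cast]

lemma cyc_add (i j c : Fin 5) : cycle5.Adj (i + c) (j + c) ↔ cycle5.Adj i j := by
  revert i j c; decide

/-- rotation: `blow (fun t => m (t + c)) ≃g blow m` -/
def rotIso (m : Fin 5 → ℕ) (c : Fin 5) : blow (fun t => m (t + c)) ≃g blow m where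
  toEquiv :=
    { toFun := fun x => ⟨x.1 + c, x.2⟩
      invFun := fun x => ⟨x.1 - c, Fin.cast (by rw [sub_add_cancel]) x.2⟩
      left_inv := fun x => by
        obtain ⟨i, b⟩ := x
        refine (sigma_fin_ext _ _).2 ⟨?_, rfl⟩
        exact add_sub_cancel_right i c
      right_inv := fun x => by
        obtain ⟨i, b⟩ := x
        refine (sigma_fin_ext _ _).2 ⟨?_, rfl⟩
        exact sub_add_cancel i c }
  map_rel_iff' := by
    rintro ⟨i, b⟩ ⟨j, d⟩
    simp only [Equiv.coe_fn_mk, blow_adj']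
    rw [cyc_add, add_left_inj]

instance blowDec (m : Fin 5 → ℕ) : DecidableRel (blow m).Adj := fun x y =>
  inferInstanceAs (Decidable (x ≠ y ∧ (x.1 = y.1 ∨ cycle5.Adj x.1 y.1)))

lemma blow_adj {m : Fin 5 → ℕ} (x y : Σ i, Fin (m i)) :
    (blow m).Adj x y ↔ x ≠ y ∧ (x.1 = y.1 ∨ cycle5.Adj x.1 y.1) := Iff.rfl

lemma cyc_iff (i j : Fin 5) : cycle5.Adj i j ↔ (j = i + 1 ∨ j = i + 4) := by
  revert i j; decide

lemma blow_neighborFinset (m : Fin 5 → ℕ) (x : Σ i, Fin (m i)) :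
    (blow m).neighborFinset x
      = Finset.univ.sigma (fun j => Finset.univ.filter fun b => (blow m).Adj x ⟨j, b⟩) := by
  ext ⟨j, b⟩
  simp [SimpleGraph.mem_neighborFinset]

lemma sum_formula (m : Fin 5 → ℕ) (i : Fin 5) :
    (∑ j : Fin 5, if j = i then m i - 1 else if cycle5.Adj i j then m j else 0)
      = (m i - 1) + m (i + 1) + m (i + 4) := by
  fin_cases i <;>
    simp (config := { decide := true }) [Fin.sum_univ_five, cyc_iff] <;> omega

lemma blow_degree (m : Fin 5 → ℕ) (i : Fin 5) (a : Fin (m i)) :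
    (blow m).degree ⟨i, a⟩ = (m i - 1) + m (i + 1) + m (i + 4) := by
  have key : ∀ j : Fin 5,
      (Finset.univ.filter fun b : Fin (m j) => (blow m).Adj ⟨i, a⟩ ⟨j, b⟩).card
        = if j = i then m i - 1 else if cycle5.Adj i j then m j else 0 := by
    intro j
    by_cases hji : j = i
    · subst hji
      rw [if_pos rfl]
      have hset : (Finset.univ.filter fun b : Fin (m j) => (blow m).Adj ⟨j, a⟩ ⟨j, b⟩)
          = Finset.univ.erase a := by
        ext b
        simp only [Finset.mem_filter, Finset.mem_univ, true_and, Finset.mem_erase,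
          and_true]
        constructor
        · rintro ⟨h1, -⟩
          intro hba
          exact h1 (by rw [hba])
        · intro hba
          exact ⟨fun h => hba (Fin.ext ((sigma_fin_ext _ _).1 h).2).symm, Or.inl rfl⟩
      rw [hset, Finset.card_erase_of_mem (Finset.mem_univ a), Finset.card_univ,
        Fintype.card_fin]
    · rw [if_neg hji]
      by_cases hadj : cycle5.Adj i j
      · rw [if_pos hadj]
        have hset : (Finset.univ.filter fun b : Fin (m j) => (blow m).Adj ⟨i, a⟩ ⟨j, b⟩)
            = Finset.univ := by
          ext b
          simp only [Finset.mem_filter, Finset.mem_univ, true_and, iff_true]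
          exact ⟨fun h => hji (((sigma_fin_ext _ _).1 h).1).symm, Or.inr hadj⟩
        rw [hset, Finset.card_univ, Fintype.card_fin]
      · rw [if_neg hadj]
        rw [Finset.card_eq_zero, Finset.filter_eq_empty_iff]
        intro b _
        rintro ⟨-, h | h⟩
        · exact hji h.symm
        · exact hadj h
  rw [SimpleGraph.degree, blow_neighborFinset, Finset.card_sigma]
  rw [Finset.sum_congr rfl fun j _ => key j]
  exact sum_formula m i

lemma blowCongr_fst {m m' : Fin 5 → ℕ} (h : ∀ i, m i = m' i) (x : Σ i, Fin (m i)) :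
    ((blowCongr h) x).1 = x.1 := by
  obtain ⟨i, b⟩ := x; rfl

lemma resem_iso (l : List (Fin 5)) :
    ∃ e : resemGraph l ≃g blow (fun i => 1 + List.count i l),
      ∀ i : Fin 5, (e (origVert l i)).1 = i := by
  induction l with
  | nil =>
    refine ⟨cycleBlowIso.trans (blowCongr fun i => by simp), fun i => ?_⟩
    rfl
  | cons v t ih =>
    obtain ⟨e, he⟩ := ih
    have hw : (e (origVert t v)).1 = v := he v
    have hfun : ∀ i, (1 + List.count i t) + (if i = (e (origVert t v)).1 then 1 else 0)
        = 1 + List.count i (v :: t) := by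
      intro i
      rw [hw, List.count_cons]
      by_cases h : i = v
      · simp [h]
        omega
      · have hb : (v == i) = false := beq_false_of_ne (fun hv : v = i => h hv.symm)
        simp only [if_neg h, hb, Bool.false_eq_true, if_false]
        omega
    refine ⟨(dupCongr e (origVert t v)).trans
      ((dupBlowIso (fun i => 1 + List.count i t) (e (origVert t v)).1
        (e (origVert t v)).2).trans (blowCongr hfun)), fun i => ?_⟩
    erw [RelIso.trans_apply, RelIso.trans_apply, blowCongr_fst]
    exact (dupBlowEquiv_inl_fst (fun i => 1 + List.count i t) (e (origVert t v)).1
      (e (origVert t i))).trans (he i)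

lemma iso_degree {V W : Type*} [Fintype V] [Fintype W] {G : SimpleGraph V}
    {H : SimpleGraph W} [DecidableRel G.Adj] [DecidableRel H.Adj] (e : G ≃g H) (v : V) :
    H.degree (e v) = G.degree v := by
  rw [← SimpleGraph.card_neighborSet_eq_degree, ← SimpleGraph.card_neighborSet_eq_degree]
  exact Fintype.card_congr (e.mapNeighborSet v).symm

lemma count_repl (a : Fin 5) (n : ℕ) :
    List.count a (List.replicate n (0 : Fin 5)) = if a = 0 then n else 0 := by
  by_cases h : a = 0
  · subst h; simp [List.count_replicate]
  · rw [if_neg h]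
    simp only [List.count_replicate]
    rw [if_neg (by simpa using fun hh : (0 : Fin 5) = a => h hh.symm)]

lemma hump_iso (M : Fin 5 → ℕ) (hM1 : ∀ t, 1 ≤ M t) (i : Fin 5)
    (h1 : M i - 1 + M (i + 1) + M (i + 4) = 2)
    (h2 : M (i + 1) - 1 + M (i + 1 + 1) + M (i + 1 + 4) = 2) :
    ∃ k : ℕ, Nonempty (blow M ≃g tildeR k) := by
  have e1 : ∀ t : Fin 5, t + 1 + 1 = t + 2 := by decide
  have e2 : ∀ t : Fin 5, t + 1 + 4 = t := by decide
  rw [e1, e2] at h2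
  have hone : ∀ t : Fin 5, t ≠ i + 3 → M t = 1 := by
    have cover : ∀ t u : Fin 5, t ≠ u + 3 → t = u ∨ t = u + 1 ∨ t = u + 2 ∨ t = u + 4 := by
      decide
    intro t ht
    have q1 := hM1 i
    have q2 := hM1 (i + 1)
    have q3 := hM1 (i + 4)
    have q4 := hM1 (i + 2)
    rcases cover t i ht with h | h | h | h <;> subst h <;> omega
  refine ⟨M (i + 3) - 1, ?_⟩
  obtain ⟨g, -⟩ := resem_iso (List.replicate (M (i + 3) - 1) 0)
  refine ⟨(rotIso M (i + 3)).symm.trans ((blowCongr fun t => ?_).trans g.symm)⟩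
  show M (t + (i + 3)) = 1 + List.count t (List.replicate (M (i + 3) - 1) (0 : Fin 5))
  rw [count_repl]
  by_cases ht : t = 0
  · subst ht
    rw [zero_add, if_pos rfl]
    have := hM1 (i + 3)
    omega
  · have htc : t + (i + 3) ≠ i + 3 := by
      intro hc
      exact ht (by rwa [add_eq_right] at hc)
    rw [hone _ htc, if_neg ht]

/-- Let `Γ` be a reseminant graph. Then `Γ` is isomorphic to `R̃_k` for some
integer `k ≥ 0` if and only if `Γ` has two adjacent vertices each of degree `2`. -/
theorem isomorphic_tildeR_iff_adjacent_degree_two {V : Type*} [Fintype V] [DecidableEq V]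
    (Γ : SimpleGraph V) [DecidableRel Γ.Adj] (h : IsReseminant Γ) :
    (∃ k : ℕ, Nonempty (Γ ≃g tildeR k)) ↔
      ∃ a b : V, Γ.Adj a b ∧ Γ.degree a = 2 ∧ Γ.degree b = 2 := by
  obtain ⟨l, ⟨f⟩⟩ := h
  obtain ⟨g, -⟩ := resem_iso l
  have E : Γ ≃g blow (fun i => 1 + List.count i l) := f.trans g
  have hM1 : ∀ t : Fin 5, 1 ≤ 1 + List.count t l := fun t => Nat.le_add_right 1 _
  constructor
  · rintro ⟨k, ⟨f'⟩⟩
    obtain ⟨g', -⟩ := resem_iso (List.replicate k 0)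
    have F : Γ ≃g blow (fun i => 1 + List.count i (List.replicate k 0)) := f'.trans g'
    have hN : ∀ j : Fin 5, j ≠ 0 → (1 + List.count j (List.replicate k (0 : Fin 5))) = 1 := by
      intro j hj
      rw [count_repl, if_neg hj]
    have hpos2 : 0 < 1 + List.count (2 : Fin 5) (List.replicate k (0 : Fin 5)) := by omega
    have hpos3 : 0 < 1 + List.count (3 : Fin 5) (List.replicate k (0 : Fin 5)) := by omega
    refine ⟨F.symm ⟨2, ⟨0, hpos2⟩⟩, F.symm ⟨3, ⟨0, hpos3⟩⟩, ?_, ?_, ?_⟩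
    · rw [F.symm.map_adj_iff, blow_adj']
      exact Or.inr (show cycle5.Adj 2 3 by decide)
    · rw [iso_degree F.symm, blow_degree]
      show 1 + List.count (2 : Fin 5) (List.replicate k (0 : Fin 5)) - 1
          + (1 + List.count (2 + 1 : Fin 5) (List.replicate k (0 : Fin 5)))
          + (1 + List.count (2 + 4 : Fin 5) (List.replicate k (0 : Fin 5))) = 2
      rw [hN 2 (by decide), hN (2 + 1) (by decide), hN (2 + 4) (by decide)]
    · rw [iso_degree F.symm, blow_degree]
      show 1 + List.count (3 : Fin 5) (List.replicate k (0 : Fin 5)) - 1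
          + (1 + List.count (3 + 1 : Fin 5) (List.replicate k (0 : Fin 5)))
          + (1 + List.count (3 + 4 : Fin 5) (List.replicate k (0 : Fin 5))) = 2
      rw [hN 3 (by decide), hN (3 + 1) (by decide), hN (3 + 4) (by decide)]
  · rintro ⟨a, b, hab, hda, hdb⟩
    have hAB : (blow _).Adj (E a) (E b) := E.map_adj_iff.2 hab
    have hdA : (blow _).degree (E a) = 2 := by rw [iso_degree E a]; exact hda
    have hdB : (blow _).degree (E b) = 2 := by rw [iso_degree E b]; exact hdb
    have dA := blow_degree (fun i => 1 + List.count i l) (E a).1 (E a).2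
    have dB := blow_degree (fun i => 1 + List.count i l) (E b).1 (E b).2
    rw [Sigma.eta, hdA] at dA
    rw [Sigma.eta, hdB] at dB
    rw [blow_adj'] at hAB
    rcases hAB with ⟨hij, hval⟩ | hcyc
    · exfalso
      have hlt1 := (E a).2.2
      have hlt2 := (E b).2.2
      have hcnt : List.count (E a).fst l = List.count (E b).fst l := by rw [hij]
      have q1 := hM1 ((E a).1 + 1)
      have q2 := hM1 ((E a).1 + 4)
      omega
    · rw [cyc_iff] at hcyc
      have trans2 : ∀ k : ℕ, Nonempty (blow (fun i => 1 + List.count i l) ≃g tildeR k) →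
          Nonempty (Γ ≃g tildeR k) := fun k ⟨w⟩ => ⟨E.trans w⟩
      rcases hcyc with hj | hj
      · rw [hj] at dB
        obtain ⟨k, hk⟩ := hump_iso (fun i => 1 + List.count i l) hM1 (E a).1 dA.symm dB.symm
        exact ⟨k, trans2 k hk⟩
      · have hi : (E a).1 = (E b).1 + 1 := by
          have hlem : ∀ i j : Fin 5, j = i + 4 → i = j + 1 := by decide
          exact hlem _ _ hj
        rw [hi] at dA
        obtain ⟨k, hk⟩ := hump_iso (fun i => 1 + List.count i l) hM1 (E b).1 dB.symm dA.symm
        exact ⟨k, trans2 k hk⟩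
end

section
/- For every integer n ≥ 0, the characteristic polynomial of the adjacency matrix A(R̃_n) equals (x³ − (n+1)x² − (n+3)x + (3n+2))·(x+1)ⁿ·(x² + x − 1). -/
instance (n : ℕ) : DecidableRel (tildeR n).Adj :=
  resemGraphAdjDecidable (List.replicate n 0)

section Aux
open Polynomial Matrix

noncomputable def NmatG {V : Type} [DecidableEq V] (G : SimpleGraph V) [DecidableRel G.Adj]
    (o : V) (c : ℝ) : Matrix V V ℝ[X] :=
  Matrix.of fun i j =>
    (if i = j then X else 0) - (if G.Adj i j then 1 else 0) -
      (if i = o ∧ (j = o ∨ G.Adj j o) then C c else 0)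

lemma dup_adj_ll {V : Type} (G : SimpleGraph V) (o : V) (a b : V) :
    (dupGraph G o).Adj (Sum.inl a) (Sum.inl b) ↔ G.Adj a b := Iff.rfl

lemma dup_adj_lr {V : Type} (G : SimpleGraph V) (o : V) (a : V) (u : Unit) :
    (dupGraph G o).Adj (Sum.inl a) (Sum.inr u) ↔ (a = o ∨ G.Adj a o) := Iff.rfl

lemma dup_adj_rl {V : Type} (G : SimpleGraph V) (o : V) (b : V) (u : Unit) :
    (dupGraph G o).Adj (Sum.inr u) (Sum.inl b) ↔ (b = o ∨ G.Adj b o) := Iff.rfl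

lemma dup_adj_rr {V : Type} (G : SimpleGraph V) (o : V) (u u' : Unit) :
    (dupGraph G o).Adj (Sum.inr u) (Sum.inr u') ↔ False := Iff.rfl

lemma det_NmatG_dup {V : Type} [Fintype V] [DecidableEq V] (G : SimpleGraph V)
    [DecidableRel G.Adj] (o : V) (c : ℝ) :
    (NmatG (dupGraph G o) (Sum.inl o) c).det = (X + 1) * (NmatG G o (c + 1)).det := by
  classical
  have hvw : (Sum.inl o : V ⊕ Unit) ≠ Sum.inr () := by simp
  set B : Matrix (V ⊕ Unit) (V ⊕ Unit) ℝ[X] :=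
    Matrix.fromBlocks (NmatG G o (c + 1)) 0
      (Matrix.of fun _ j => -(if j = o ∨ G.Adj j o then (1:ℝ[X]) else 0))
      (((X + 1 : ℝ[X])) • (1 : Matrix Unit Unit ℝ[X])) with hB
  have key : NmatG (dupGraph G o) (Sum.inl o) c *
        Matrix.transvection (Sum.inl o) (Sum.inr ()) (-1)
      = Matrix.transvection (Sum.inl o) (Sum.inr ()) (-1) * B := by
    funext i j
    rcases i with a | u <;> rcases j with b | u'
    · -- (inl a, inl b)
      rw [Matrix.mul_transvection_apply_of_ne (Sum.inl o) (Sum.inr ()) (Sum.inl a)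
        (Sum.inl b) (by simp)]
      by_cases ha : a = o
      · rw [ha, Matrix.transvection_mul_apply_same (Sum.inl o) (Sum.inr ()) (Sum.inl b)]
        simp only [hB, Matrix.fromBlocks_apply₁₁, Matrix.fromBlocks_apply₂₁, NmatG,
          Matrix.of_apply, dup_adj_ll, Sum.inl.injEq, true_and, Polynomial.C_add,
          Polynomial.C_1]
        split_ifs <;> (try subst_vars) <;> first | ring | simp_all [SimpleGraph.irrefl]
      · rw [Matrix.transvection_mul_apply_of_ne (Sum.inl o) (Sum.inr ()) (Sum.inl a)
          (Sum.inl b) (by simp [ha])]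
        simp only [hB, Matrix.fromBlocks_apply₁₁, NmatG, Matrix.of_apply, dup_adj_ll,
          Sum.inl.injEq, ha, false_and, if_false]
    · -- (inl a, inr)
      rw [Matrix.mul_transvection_apply_same (Sum.inl o) (Sum.inr ()) (Sum.inl a)]
      by_cases ha : a = o
      · rw [ha, Matrix.transvection_mul_apply_same (Sum.inl o) (Sum.inr ()) (Sum.inr u')]
        simp only [hB, Matrix.fromBlocks_apply₁₂, Matrix.fromBlocks_apply₂₂, NmatG,
          Matrix.of_apply, dup_adj_lr, dup_adj_ll, Sum.inl.injEq, Matrix.zero_apply,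
          dup_adj_rl, Matrix.smul_apply, Matrix.one_apply_eq, smul_eq_mul, mul_one,
          reduceCtorEq]
        simp [G.irrefl]
        ring
      · rw [Matrix.transvection_mul_apply_of_ne (Sum.inl o) (Sum.inr ()) (Sum.inl a)
          (Sum.inr u') (by simp [ha])]
        simp only [hB, Matrix.fromBlocks_apply₁₂, NmatG, Matrix.of_apply, dup_adj_lr,
          dup_adj_ll, Sum.inl.injEq, ha, false_and, if_false, Matrix.zero_apply,
          reduceCtorEq, false_or]
        split_ifs <;> ring
    · -- (inr, inl b)
      rw [Matrix.mul_transvection_apply_of_ne (Sum.inl o) (Sum.inr ()) (Sum.inr u)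
        (Sum.inl b) (by simp),
        Matrix.transvection_mul_apply_of_ne (Sum.inl o) (Sum.inr ()) (Sum.inr u)
        (Sum.inl b) (by simp)]
      simp only [hB, Matrix.fromBlocks_apply₂₁, NmatG, Matrix.of_apply, dup_adj_rl,
        reduceCtorEq, false_and, if_false]
      ring
    · -- (inr, inr)
      rw [Matrix.mul_transvection_apply_same (Sum.inl o) (Sum.inr ()) (Sum.inr u),
        Matrix.transvection_mul_apply_of_ne (Sum.inl o) (Sum.inr ()) (Sum.inr u)
        (Sum.inr u') (by simp)]
      simp only [hB, Matrix.fromBlocks_apply₂₂, NmatG, Matrix.of_apply, dup_adj_rr,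
        dup_adj_rl, Matrix.smul_apply, Matrix.one_apply_eq, smul_eq_mul, mul_one,
        reduceCtorEq, false_and, if_false]
      simp [dup_adj_rl]
  have hdet := congrArg Matrix.det key
  rw [Matrix.det_mul, Matrix.det_mul, Matrix.det_transvection_of_ne _ _ hvw, mul_one,
    one_mul] at hdet
  rw [hdet, hB, Matrix.det_fromBlocks_zero₁₂,
    show ((X + 1 : ℝ[X]) • (1 : Matrix Unit Unit ℝ[X])).det = X + 1 by
      rw [Matrix.det_unique]; simp]
  ring


lemma charmatrix_eq_NmatG {V : Type} [Fintype V] [DecidableEq V] (G : SimpleGraph V)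
    [DecidableRel G.Adj] (o : V) :
    Matrix.charmatrix (G.adjMatrix ℝ) = NmatG G o 0 := by
  funext i j
  simp [Matrix.charmatrix_apply, Matrix.diagonal, NmatG, apply_ite (Polynomial.C (R := ℝ))]

lemma det_NmatG_cycle5 (c : ℝ) :
    (NmatG cycle5 0 c).det =
      (X ^ 3 - C (c + 1) * X ^ 2 - C (c + 3) * X + C (3 * c + 2)) * (X ^ 2 + X - 1) := by
  have h : NmatG cycle5 0 c =
      !![X - C c, -1 - C c, 0, 0, -1 - C c;
         -1, X, -1, 0, 0;
         0, -1, X, -1, 0;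
         0, 0, -1, X, -1;
         -1, 0, 0, -1, X] := by
    funext i j
    fin_cases i <;> fin_cases j <;>
      simp (config := { decide := true }) [NmatG, cycle5, SimpleGraph.fromRel_adj]
  rw [h]
  simp [Matrix.det_succ_row_zero, Fin.sum_univ_succ, Fin.succAbove]
  simp only [map_add, map_mul, map_ofNat, C_1]
  ring

set_option maxRecDepth 4000 in
lemma det_Nmat_replicate (n : ℕ) : ∀ c : ℝ,
    (NmatG (resemGraph (List.replicate n 0)) (origVert (List.replicate n 0) 0) c).det
      = (X + 1) ^ n * (NmatG cycle5 0 (c + n)).det := by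
  induction n with
  | zero =>
    intro c
    simp only [Nat.cast_zero, add_zero, pow_zero, one_mul]
    rfl
  | succ n ih =>
    intro c
    have h1 : (NmatG (resemGraph (List.replicate (n + 1) 0))
          (origVert (List.replicate (n + 1) 0) 0) c).det
        = (X + 1) * (NmatG (resemGraph (List.replicate n 0))
            (origVert (List.replicate n 0) 0) (c + 1)).det :=
      det_NmatG_dup (resemGraph (List.replicate n 0)) (origVert (List.replicate n 0) 0) c
    rw [h1, ih (c + 1), pow_succ,
      show c + 1 + (n : ℝ) = c + ((n + 1 : ℕ) : ℝ) by push_cast; ring]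
    ring

end Aux

open Polynomial in
/-- For every integer `n ≥ 0`, the characteristic polynomial of the
adjacency matrix `A(R̃_n)` equals
`(x³ − (n+1)x² − (n+3)x + (3n+2)) · (x+1)ⁿ · (x² + x − 1)`. -/
theorem charpoly_tildeR (n : ℕ) :
    ((tildeR n).adjMatrix ℝ).charpoly =
      (X ^ 3 - C ((n : ℝ) + 1) * X ^ 2 - C ((n : ℝ) + 3) * X + C (3 * (n : ℝ) + 2)) *
        (X + 1) ^ n * (X ^ 2 + X - 1) := by
  have hA : (tildeR n).adjMatrix ℝ = (resemGraph (List.replicate n 0)).adjMatrix ℝ := rfl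
  rw [Matrix.charpoly, hA,
    charmatrix_eq_NmatG (resemGraph (List.replicate n 0)) (origVert (List.replicate n 0) 0),
    det_Nmat_replicate n 0, det_NmatG_cycle5]
  simp only [zero_add]
  ring
end
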